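/- Let G be a finite nilpotent group and w : Gⁿ → G a surjective word map (induced by a word in the free group on n generators). Then for every g ∈ G, |w⁻¹(g)| = |G|^(n-1); i.e., the induced probability distribution is uniform. -/

import Mathlib

open Subgroup
open scoped IsMulCommutative

namespace Stmt7

variable {n : ℕ}

/-- exponent sum of generator `i` in the word `w` -/
noncomputable def expSum (w : FreeGroup (Fin n)) (i : Fin n) : ℤ :=
  Multiplicative.toAdd
    (FreeGroup.lift (fun j => Multiplicative.ofAdd (if j = i then (1 : ℤ) else 0)) w)

@[simp] theorem expSum_one (i : Fin n) : expSum (1 : FreeGroup (Fin n)) i = 0 := by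
  simp [expSum]

@[simp] theorem expSum_of (x i : Fin n) :
    expSum (FreeGroup.of x) i = if x = i then 1 else 0 := by
  simp [expSum]

@[simp] theorem expSum_mul (u v : FreeGroup (Fin n)) (i : Fin n) :
    expSum (u * v) i = expSum u i + expSum v i := by
  simp [expSum]

@[simp] theorem expSum_inv (u : FreeGroup (Fin n)) (i : Fin n) :
    expSum u⁻¹ i = - expSum u i := by
  simp [expSum]

theorem lift_eq_prod_zpow {Z : Type*} [CommGroup Z] (z : Fin n → Z) (w : FreeGroup (Fin n)) :
    FreeGroup.lift z w = ∏ i, z i ^ expSum w i := by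
  induction w using FreeGroup.induction_on with
  | C1 => simp
  | of x =>
      have h1 : ∀ i, z i ^ expSum (FreeGroup.of x) i = if x = i then z i else 1 := by
        intro i
        rw [expSum_of]
        split <;> simp
      have : (FreeGroup.lift z) (FreeGroup.of x) = z x := FreeGroup.lift_apply_of
      rw [this]
      rw [Finset.prod_congr rfl fun i _ => h1 i]
      simp [Finset.prod_ite_eq' Finset.univ x fun i => z i]
  | inv_of x hx =>
      rw [map_inv, hx]
      rw [← Finset.prod_inv_distrib]
      refine Finset.prod_congr rfl fun i _ => ?_
      rw [expSum_inv, zpow_neg]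
  | mul u v hu hv =>
      rw [map_mul, hu, hv, ← Finset.prod_mul_distrib]
      refine Finset.prod_congr rfl fun i _ => ?_
      rw [expSum_mul, zpow_add]

/-- the power-product homomorphism `z ↦ ∏ i, z i ^ a i` on a commutative group -/
def powHom (Z : Type*) [CommGroup Z] (a : Fin n → ℤ) : (Fin n → Z) →* Z :=
  MonoidHom.mk' (fun z => ∏ i, z i ^ a i) (by
    intro x y
    rw [← Finset.prod_mul_distrib]
    exact Finset.prod_congr rfl fun i _ => by simp [mul_zpow])

theorem powHom_apply {Z : Type*} [CommGroup Z] (a : Fin n → ℤ) (z : Fin n → Z) :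
    powHom Z a z = ∏ i, z i ^ a i := rfl

theorem powHom_surjective {Z : Type*} [CommGroup Z] [Finite Z] (a : Fin n → ℤ)
    (h : ∀ p : ℕ, p.Prime → p ∣ Nat.card Z → ∃ i, ¬ (p : ℤ) ∣ a i) :
    Function.Surjective (powHom Z a) := by
  set H := (powHom Z a).range with hH
  haveI : H.Normal := H.normal_of_comm
  have key : ∀ y : Z, (y : Z ⧸ H) = 1 := by
    intro y
    by_contra hy
    have h1 : orderOf ((y : Z ⧸ H)) ≠ 1 := by
      simpa [orderOf_eq_one_iff] using hy
    obtain ⟨p, hp, hdvd⟩ := Nat.exists_prime_and_dvd h1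
    have hpcard : p ∣ Nat.card Z := by
      have h2 : orderOf ((y : Z ⧸ H)) ∣ Nat.card (Z ⧸ H) := orderOf_dvd_natCard _
      have h3 : Nat.card (Z ⧸ H) ∣ Nat.card Z := by
        rw [Subgroup.card_eq_card_quotient_mul_card_subgroup H]
        exact dvd_mul_right _ _
      exact hdvd.trans (h2.trans h3)
    obtain ⟨i, hi⟩ := h p hp hpcard
    have hmem : y ^ a i ∈ H := by
      refine ⟨fun j => if j = i then y else 1, ?_⟩
      rw [powHom_apply]
      have h4 : ∀ j, ((if j = i then y else 1) : Z) ^ a j = if j = i then y ^ a i else 1 := by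
        intro j
        by_cases hj : j = i
        · subst hj; simp
        · simp [hj]
      rw [Finset.prod_congr rfl fun j _ => h4 j]
      simp [Finset.prod_ite_eq' Finset.univ i fun _ => y ^ a i]
    have h5 : ((y : Z ⧸ H)) ^ a i = 1 := by
      rw [← QuotientGroup.mk_zpow]
      exact (QuotientGroup.eq_one_iff _).mpr hmem
    have h6 : ((orderOf ((y : Z ⧸ H)) : ℤ)) ∣ a i := orderOf_dvd_iff_zpow_eq_one.mpr h5
    exact hi ((Int.natCast_dvd_natCast.mpr hdvd).trans h6)
  intro y
  obtain ⟨z, hz⟩ := (QuotientGroup.eq_one_iff y).mp (key y)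
  exact ⟨z, hz⟩

/-- fibers of a surjective homomorphism between finite groups -/
theorem card_fiber_mul_card (A B : Type*) [Group A] [Group B] [Finite A] (f : A →* B)
    (hf : Function.Surjective f) (b : B) :
    Nat.card {x : A // f x = b} * Nat.card B = Nat.card A := by
  obtain ⟨a0, ha0⟩ := hf b
  have e : {x : A // f x = b} ≃ f.ker :=
    { toFun := fun x => ⟨a0⁻¹ * x.1, by
        simp [MonoidHom.mem_ker, ha0, x.2]⟩
      invFun := fun k => ⟨a0 * k.1, by
        have := MonoidHom.mem_ker.mp k.2
        simp [this, ha0]⟩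
      left_inv := fun x => by
        ext; simp
      right_inv := fun k => by
        ext; simp }
  haveI : Finite B := Finite.of_surjective f hf
  rw [Nat.card_congr e]
  have e2 : (A ⧸ f.ker) ≃ B := (QuotientGroup.quotientKerEquivOfSurjective f hf).toEquiv
  rw [show Nat.card B = Nat.card (A ⧸ f.ker) from (Nat.card_congr e2).symm]
  rw [mul_comm, ← Subgroup.card_eq_card_quotient_mul_card_subgroup]

theorem map_lift {G H : Type*} [Group G] [Group H] (f : G →* H) (v : Fin n → G)
    (w : FreeGroup (Fin n)) :
    f (FreeGroup.lift v w) = FreeGroup.lift (fun i => f (v i)) w := by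
  have h : f.comp (FreeGroup.lift v) = FreeGroup.lift (fun i => f (v i)) :=
    FreeGroup.ext_hom _ _ (by simp)
  exact DFunLike.congr_fun h w

theorem lift_mul_central {G : Type*} [Group G] (v : Fin n → G)
    (z : Fin n → Subgroup.center G) (w : FreeGroup (Fin n)) :
    FreeGroup.lift (fun i => v i * (z i : G)) w
      = FreeGroup.lift v w * ((FreeGroup.lift z w : Subgroup.center G) : G) := by
  have hc : ∀ x : FreeGroup (Fin n),
      ((FreeGroup.lift z x : Subgroup.center G) : G) ∈ Subgroup.center G :=
    fun x => (FreeGroup.lift z x).2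
  let φ : FreeGroup (Fin n) →* G := MonoidHom.mk'
    (fun x => FreeGroup.lift v x * ((FreeGroup.lift z x : Subgroup.center G) : G)) (by
      intro a b
      have hcomm := Subgroup.mem_center_iff.mp (hc a) (FreeGroup.lift v b)
      push_cast [map_mul]
      have key : ∀ p q r s : G, q * r = r * q → p * q * (r * s) = p * r * (q * s) := by
        intro p q r s h
        rw [mul_assoc, ← mul_assoc q, h, mul_assoc, mul_assoc]
      exact key _ _ _ _ hcomm)
  have h : φ = FreeGroup.lift (fun i => v i * (z i : G)) := by
    refine FreeGroup.ext_hom _ _ fun a => ?_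
    show FreeGroup.lift v (FreeGroup.of a) * _ = _
    simp [φ]
  exact (DFunLike.congr_fun h w).symm


/-- In a nilpotent group, every nontrivial normal subgroup meets the center nontrivially. -/
theorem exists_mem_inf_center_ne_one {G : Type*} [Group G] [Group.IsNilpotent G]
    (N : Subgroup G) [N.Normal] (hN : N ≠ ⊥) :
    ∃ x : G, x ∈ N ∧ x ∈ Subgroup.center G ∧ x ≠ 1 := by
  have hex : ∃ i, N ⊓ Subgroup.upperCentralSeries G i ≠ ⊥ := by
    refine ⟨Group.nilpotencyClass G, ?_⟩
    rw [Subgroup.upperCentralSeries_nilpotencyClass, inf_top_eq]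
    exact hN
  classical
  let i0 := Nat.find hex
  have hi0 : N ⊓ Subgroup.upperCentralSeries G i0 ≠ ⊥ := Nat.find_spec hex
  have hne : i0 ≠ 0 := by
    intro h
    apply hi0
    rw [h, Subgroup.upperCentralSeries_zero, inf_bot_eq]
  obtain ⟨j, hj⟩ := Nat.exists_eq_succ_of_ne_zero hne
  have hmin : N ⊓ Subgroup.upperCentralSeries G j = ⊥ := by
    by_contra h
    have hle : i0 ≤ j := Nat.find_le h
    omega
  obtain ⟨⟨x, hx⟩, hx1⟩ := Subgroup.ne_bot_iff_exists_ne_one.mp hi0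
  have hxN : x ∈ N := hx.1
  have hxu : x ∈ Subgroup.upperCentralSeries G (j + 1) := by
    have := hx.2
    rwa [hj] at this
  refine ⟨x, hxN, ?_, by simpa using hx1⟩
  rw [Subgroup.mem_center_iff]
  intro g
  have hcomm : x * g * x⁻¹ * g⁻¹ ∈ Subgroup.upperCentralSeries G j :=
    Subgroup.mem_upperCentralSeries_succ_iff.mp hxu g
  have hcommN : x * g * x⁻¹ * g⁻¹ ∈ N := by
    have h1 : g * x⁻¹ * g⁻¹ ∈ N := by
      have := Subgroup.Normal.conj_mem ‹N.Normal› x⁻¹ (inv_mem hxN) g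
      simpa [mul_assoc] using this
    have := mul_mem hxN h1
    simpa [mul_assoc] using this
  have : x * g * x⁻¹ * g⁻¹ ∈ (⊥ : Subgroup G) := by
    rw [← hmin]
    exact ⟨hcommN, hcomm⟩
  have h1 : x * g * x⁻¹ * g⁻¹ = 1 := Subgroup.mem_bot.mp this
  have : x * g = g * x := by
    have h2 : x * g * x⁻¹ = g := by
      have := congrArg (· * g) h1
      simpa [mul_assoc] using this
    calc x * g = (x * g * x⁻¹) * x := by simp [mul_assoc]
    _ = g * x := by rw [h2]
  exact this.symm

/-- In a finite nilpotent group, there's a central element of order `q`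
for every prime `q` dividing the order. -/
theorem exists_central_prime_order {G : Type*} [Group G] [Finite G] [Group.IsNilpotent G]
    (q : ℕ) (hq : q.Prime) (hdvd : q ∣ Nat.card G) :
    ∃ z : G, z ∈ Subgroup.center G ∧ orderOf z = q := by
  haveI : Fact q.Prime := ⟨hq⟩
  -- a Sylow q-subgroup, which is normal and nontrivial
  obtain ⟨P⟩ := (inferInstance : Nonempty (Sylow q G))
  have hcardP : Nat.card P = q ^ (Nat.card G).factorization q := P.card_eq_multiplicity
  have hfact : (Nat.card G).factorization q ≠ 0 := by
    have := (Nat.Prime.factorization_pos_of_dvd hq (Nat.card_pos).ne' hdvd)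
    omega
  have hPbot : (P : Subgroup G) ≠ ⊥ := by
    intro h
    have : Nat.card P = 1 := by rw [h]; simp
    rw [hcardP] at this
    have hd : q ∣ 1 := this ▸ dvd_pow_self q hfact
    exact hq.one_lt.ne' (Nat.dvd_one.mp hd)
  haveI hnormal : (P : Subgroup G).Normal := by
    have htfae := (isNilpotent_of_finite_tfae (G := G)).out 0 3
    exact htfae.mp ‹_› q ⟨hq⟩ P
  obtain ⟨x, hxP, hxC, hx1⟩ := exists_mem_inf_center_ne_one (P : Subgroup G) hPbot
  -- orderOf x is a positive power of q
  have hordP : orderOf x ∣ q ^ (Nat.card G).factorization q := by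
    rw [← hcardP]
    have h2 : orderOf (⟨x, hxP⟩ : P) ∣ Nat.card P := orderOf_dvd_natCard _
    rwa [Subgroup.orderOf_mk] at h2
  obtain ⟨m, hm, hxm⟩ := (Nat.dvd_prime_pow hq).mp hordP
  have hm0 : m ≠ 0 := by
    intro h
    rw [h, pow_zero] at hxm
    exact hx1 (orderOf_eq_one_iff.mp hxm)
  have hqord : q ∣ orderOf x := hxm ▸ dvd_pow_self q hm0
  -- so q divides the order of the center
  have hqcenter : q ∣ Nat.card (Subgroup.center G) := by
    have h1 : orderOf (⟨x, hxC⟩ : Subgroup.center G) ∣ Nat.card (Subgroup.center G) :=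
      orderOf_dvd_natCard _
    rw [Subgroup.orderOf_mk] at h1
    exact hqord.trans h1
  obtain ⟨z, hz⟩ := exists_prime_orderOf_dvd_card' (G := Subgroup.center G) q hqcenter
  refine ⟨(z : G), z.2, ?_⟩
  rw [Subgroup.orderOf_coe]
  exact hz


universe u

theorem surj_quot {G H : Type*} [Group G] [Group H] (f : G →* H)
    (hf : Function.Surjective f) (w : FreeGroup (Fin n))
    (hsurj : Function.Surjective (fun v : Fin n → G => FreeGroup.lift v w)) :
    Function.Surjective (fun v : Fin n → H => FreeGroup.lift v w) := by
  intro h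
  obtain ⟨g, hg⟩ := hf h
  obtain ⟨v, hv⟩ := hsurj g
  refine ⟨fun i => f (v i), ?_⟩
  simp only
  rw [← map_lift]
  simp only at hv
  rw [hv, hg]

theorem normal_of_le_center {G : Type*} [Group G] {W : Subgroup G}
    (h : W ≤ Subgroup.center G) : W.Normal := by
  constructor
  intro x hx g
  have h1 : g * x = x * g := Subgroup.mem_center_iff.mp (h hx) g
  have h2 : g * x * g⁻¹ = x := by rw [h1, mul_inv_cancel_right]
  rwa [h2]

/-- In a finite nilpotent group with surjective word map, for every prime `p` dividing
the order of the group, some exponent sum of the word is not divisible by `p`. -/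
theorem exists_expSum_not_dvd (w : FreeGroup (Fin n)) :
    ∀ (N : ℕ) (G : Type u) [Group G] [Finite G] [Group.IsNilpotent G],
      Nat.card G = N →
      Function.Surjective (fun v : Fin n → G => FreeGroup.lift v w) →
      ∀ p : ℕ, p.Prime → p ∣ Nat.card G → ∃ i, ¬ (p : ℤ) ∣ expSum w i := by
  intro N
  induction N using Nat.strong_induction_on with
  | _ N ih =>
  intro G _ _ _ hN hsurj p hp hdvd
  by_contra hcon
  push_neg at hcon
  have step : ∀ q : ℕ, q.Prime → q ∣ Nat.card G →
      (∀ c : ℕ, Nat.card G = c * q → p ∣ c) → False := by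
    intro q hq hqd hpd
    obtain ⟨z, hzc, hzo⟩ := exists_central_prime_order q hq hqd
    have hWle : Subgroup.zpowers z ≤ Subgroup.center G := Subgroup.zpowers_le.mpr hzc
    haveI : (Subgroup.zpowers z).Normal := normal_of_le_center hWle
    have hcardW : Nat.card (Subgroup.zpowers z) = q := by
      rw [Nat.card_zpowers, hzo]
    have hsplit : Nat.card G = Nat.card (G ⧸ Subgroup.zpowers z) * q := by
      rw [← hcardW]
      exact Subgroup.card_eq_card_quotient_mul_card_subgroup _
    have hpQ : p ∣ Nat.card (G ⧸ Subgroup.zpowers z) := hpd _ hsplit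
    have hQpos : 0 < Nat.card (G ⧸ Subgroup.zpowers z) := Nat.card_pos
    have hlt : Nat.card (G ⧸ Subgroup.zpowers z) < N := by
      rw [← hN, hsplit]
      exact (lt_mul_iff_one_lt_right hQpos).mpr hq.one_lt
    obtain ⟨i, hi⟩ := ih _ hlt (G ⧸ Subgroup.zpowers z) rfl
      (surj_quot (QuotientGroup.mk' _) (QuotientGroup.mk'_surjective _) w hsurj) p hp hpQ
    exact hi (hcon i)
  by_cases hq : ∃ q : ℕ, q.Prime ∧ q ∣ Nat.card G ∧ q ≠ p
  · obtain ⟨q, hq1, hq2, hq3⟩ := hq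
    refine step q hq1 hq2 ?_
    intro c hc
    have h1 : p ∣ c * q := hc ▸ hdvd
    rcases (Nat.Prime.dvd_mul hp).mp h1 with h | h
    · exact h
    · exact absurd ((Nat.prime_dvd_prime_iff_eq hp hq1).mp h) (Ne.symm hq3)
  · push_neg at hq
    by_cases hpp : p * p ∣ Nat.card G
    · refine step p hp hdvd ?_
      intro c hc
      rw [hc] at hpp
      exact (mul_dvd_mul_iff_right hp.pos.ne').mp hpp
    · have hcardp : Nat.card G = p := by
        obtain ⟨c, hc⟩ := hdvd
        have hc1 : c = 1 := by
          by_contra h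
          obtain ⟨r, hr, hrc⟩ := Nat.exists_prime_and_dvd h
          have h2 : r ∣ Nat.card G := hc ▸ (hrc.mul_left p)
          have h3 : r = p := hq r hr h2
          rw [h3] at hrc
          exact hpp (hc ▸ mul_dvd_mul_left p hrc)
        rw [hc, hc1, mul_one]
      haveI : Fact p.Prime := ⟨hp⟩
      haveI : IsCyclic G := isCyclic_of_prime_card hcardp
      letI : CommGroup G := IsCyclic.commGroup
      have hone : ∀ v : Fin n → G, FreeGroup.lift v w = 1 := by
        intro v
        have h2 : (∏ i, v i ^ expSum w i) = 1 := by
          refine Finset.prod_eq_one fun i _ => ?_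
          have hord : (orderOf (v i) : ℤ) ∣ expSum w i := by
            refine dvd_trans ?_ (hcon i)
            have : orderOf (v i) ∣ p := hcardp ▸ orderOf_dvd_natCard (v i)
            exact_mod_cast Int.natCast_dvd_natCast.mpr this
          exact orderOf_dvd_iff_zpow_eq_one.mp hord
        exact (lift_eq_prod_zpow v w).trans h2
      have hall : ∀ g : G, g = 1 := by
        intro g
        obtain ⟨v, hv⟩ := hsurj g
        simp only at hv
        rw [← hv, hone v]
      haveI : Subsingleton G := ⟨fun a b => by rw [hall a, hall b]⟩
      have h1 : Nat.card G = 1 := Nat.card_of_subsingleton 1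
      rw [hcardp] at h1
      exact hp.one_lt.ne' h1

theorem main_aux (w : FreeGroup (Fin n)) :
    ∀ (N : ℕ) (G : Type u) [Group G] [Finite G] [Group.IsNilpotent G],
      Nat.card G = N →
      Function.Surjective (fun v : Fin n → G => FreeGroup.lift v w) →
      ∀ g : G, Nat.card {v : Fin n → G // FreeGroup.lift v w = g} = Nat.card G ^ (n - 1) := by
  intro N
  induction N using Nat.strong_induction_on with
  | _ N ih =>
  intro G _ _ _ hN hsurj g
  rcases subsingleton_or_nontrivial G with hGs | hGn
  · have h1 : Nat.card G = 1 := Nat.card_of_subsingleton 1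
    have h2 : Nat.card {v : Fin n → G // FreeGroup.lift v w = g} = 1 :=
      Nat.card_of_subsingleton ⟨fun _ => 1, Subsingleton.elim _ _⟩
    rw [h1, h2, one_pow]
  · classical
    have hn0 : n ≠ 0 := by
      rintro rfl
      exact (not_subsingleton G) hsurj.subsingleton
    obtain ⟨x, -, hxc, hx1⟩ := exists_mem_inf_center_ne_one (⊤ : Subgroup G) top_ne_bot
    have hZbot : Subgroup.center G ≠ ⊥ := fun h => hx1 (Subgroup.mem_bot.mp (h ▸ hxc))
    have hZ1 : 1 < Nat.card (Subgroup.center G) :=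
      (Subgroup.one_lt_card_iff_ne_bot _).mpr hZbot
    have hsurjQ : Function.Surjective
        (fun v : Fin n → G ⧸ Subgroup.center G => FreeGroup.lift v w) :=
      surj_quot (QuotientGroup.mk' _) (QuotientGroup.mk'_surjective _) w hsurj
    have hcardsplit : Nat.card G
        = Nat.card (G ⧸ Subgroup.center G) * Nat.card (Subgroup.center G) :=
      Subgroup.card_eq_card_quotient_mul_card_subgroup _
    have hQpos : 0 < Nat.card (G ⧸ Subgroup.center G) := Nat.card_pos
    have hQlt : Nat.card (G ⧸ Subgroup.center G) < N := by
      rw [← hN, hcardsplit]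
      exact (lt_mul_iff_one_lt_right hQpos).mpr hZ1
    have IH := ih _ hQlt (G ⧸ Subgroup.center G) rfl hsurjQ
    -- the quotient map commutes with the word map
    have hml : ∀ v : Fin n → G,
        ((FreeGroup.lift v w : G) : G ⧸ Subgroup.center G)
          = FreeGroup.lift (fun i => ((v i : G) : G ⧸ Subgroup.center G)) w := by
      intro v
      have h := map_lift (QuotientGroup.mk' (Subgroup.center G)) v w
      simpa using h
    -- surjectivity of the central power map
    have hEsurj : Function.Surjective (powHom (Subgroup.center G) (expSum w)) := by
      apply powHom_surjective
      intro p hp hpd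
      exact exists_expSum_not_dvd w (Nat.card G) G rfl hsurj p hp
        (hpd.trans (Subgroup.card_subgroup_dvd_card _))
    have hEfiber : ∀ c : Subgroup.center G,
        Nat.card {z : Fin n → Subgroup.center G // powHom (Subgroup.center G) (expSum w) z = c}
          = Nat.card (Subgroup.center G) ^ (n - 1) := by
      intro c
      have h1 := card_fiber_mul_card _ _ (powHom (Subgroup.center G) (expSum w)) hEsurj c
      have h2 : Nat.card (Fin n → Subgroup.center G)
          = Nat.card (Subgroup.center G) ^ n := by
        rw [Nat.card_fun]
        simp
      rw [h2] at h1
      have h3 : Nat.card (Subgroup.center G) ^ n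
          = Nat.card (Subgroup.center G) ^ (n - 1) * Nat.card (Subgroup.center G) := by
        conv_lhs => rw [show n = (n - 1) + 1 by omega]
        rw [pow_succ]
      rw [h3] at h1
      exact Nat.eq_of_mul_eq_mul_right Nat.card_pos h1
    -- the projection between fibers
    let F : {v : Fin n → G // FreeGroup.lift v w = g} →
        {u : Fin n → G ⧸ Subgroup.center G //
          FreeGroup.lift u w = (g : G ⧸ Subgroup.center G)} :=
      fun x => ⟨fun i => ((x.1 i : G) : G ⧸ Subgroup.center G), by
        rw [← hml, x.2]⟩
    have e1 : {v : Fin n → G // FreeGroup.lift v w = g} ≃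
        Σ u : {u : Fin n → G ⧸ Subgroup.center G //
          FreeGroup.lift u w = (g : G ⧸ Subgroup.center G)},
          {x : {v : Fin n → G // FreeGroup.lift v w = g} // F x = u} :=
      (Equiv.sigmaFiberEquiv F).symm
    -- each fiber of F is equivalent to a fiber of the central power map
    have hFfiber : ∀ u : {u : Fin n → G ⧸ Subgroup.center G //
          FreeGroup.lift u w = (g : G ⧸ Subgroup.center G)},
        Nat.card {x : {v : Fin n → G // FreeGroup.lift v w = g} // F x = u}
          = Nat.card (Subgroup.center G) ^ (n - 1) := by
      intro u
      have hv0 : ∀ i, ∃ y : G, (y : G ⧸ Subgroup.center G) = u.1 i := fun i =>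
        QuotientGroup.mk_surjective (u.1 i)
      choose v0 hout using hv0
      have h4 : ((FreeGroup.lift v0 w : G) : G ⧸ Subgroup.center G)
          = (g : G ⧸ Subgroup.center G) := by
        rw [hml v0]
        have : (fun i => ((v0 i : G) : G ⧸ Subgroup.center G)) = u.1 := funext hout
        rw [this, u.2]
      have hc : (FreeGroup.lift v0 w : G)⁻¹ * g ∈ Subgroup.center G := by
        rw [← QuotientGroup.eq_one_iff]
        rw [QuotientGroup.mk_mul, QuotientGroup.mk_inv, h4]
        simp
      set c : Subgroup.center G := ⟨(FreeGroup.lift v0 w : G)⁻¹ * g, hc⟩ with hcdef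
      have e2 : {x : {v : Fin n → G // FreeGroup.lift v w = g} // F x = u} ≃
          {z : Fin n → Subgroup.center G //
            powHom (Subgroup.center G) (expSum w) z = c} := by
        refine ⟨?_, ?_, ?_, ?_⟩
        · -- forward
          rintro ⟨⟨v, hv⟩, hFu⟩
          have hcoord : ∀ i, ((v i : G) : G ⧸ Subgroup.center G) = u.1 i := by
            intro i
            exact congrFun (congrArg Subtype.val hFu) i
          have hzmem : ∀ i, (v0 i)⁻¹ * v i ∈ Subgroup.center G := by
            intro i
            rw [← QuotientGroup.eq_one_iff, QuotientGroup.mk_mul, QuotientGroup.mk_inv,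
              hout i, hcoord i]
            simp
          refine ⟨fun i => ⟨(v0 i)⁻¹ * v i, hzmem i⟩, ?_⟩
          have hveq : (fun i => v0 i * ((⟨(v0 i)⁻¹ * v i, hzmem i⟩ :
              Subgroup.center G) : G)) = v := by
            funext i
            simp
          have h5 := lift_mul_central v0 (fun i => ⟨(v0 i)⁻¹ * v i, hzmem i⟩) w
          rw [hveq, hv] at h5
          have h6 : ((FreeGroup.lift (fun i => (⟨(v0 i)⁻¹ * v i, hzmem i⟩ :
              Subgroup.center G)) w : Subgroup.center G) : G)
              = (FreeGroup.lift v0 w : G)⁻¹ * g := by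
            rw [h5, inv_mul_cancel_left]
          have h8 : (powHom (Subgroup.center G) (expSum w))
              (fun i => (⟨(v0 i)⁻¹ * v i, hzmem i⟩ : Subgroup.center G))
              = FreeGroup.lift (fun i => (⟨(v0 i)⁻¹ * v i, hzmem i⟩ :
                Subgroup.center G)) w := by
            rw [powHom_apply, lift_eq_prod_zpow]
          apply Subtype.ext
          rw [h8]
          exact h6
        · -- backward
          rintro ⟨z, hz⟩
          have hlift : FreeGroup.lift (fun i => v0 i * ((z i : G))) w = g := by
            rw [lift_mul_central v0 z w]
            have h7 : ((FreeGroup.lift z w : Subgroup.center G) : G)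
                = (FreeGroup.lift v0 w : G)⁻¹ * g := by
              rw [lift_eq_prod_zpow]
              rw [show (∏ i, z i ^ expSum w i) = powHom (Subgroup.center G) (expSum w) z
                from rfl]
              rw [hz, hcdef]
            rw [h7]
            group
          refine ⟨⟨fun i => v0 i * (z i : G), hlift⟩, ?_⟩
          apply Subtype.ext
          funext i
          show ((v0 i * (z i : G) : G) : G ⧸ Subgroup.center G) = u.1 i
          rw [QuotientGroup.mk_mul]
          rw [(QuotientGroup.eq_one_iff _).mpr (z i).2]
          rw [mul_one, hout i]
        · rintro ⟨⟨v, hv⟩, hFu⟩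
          apply Subtype.ext
          apply Subtype.ext
          funext i
          simp
        · rintro ⟨z, hz⟩
          apply Subtype.ext
          funext i
          apply Subtype.ext
          simp
      rw [Nat.card_congr e2]
      exact hEfiber c
    -- put the count together
    rw [Nat.card_congr e1]
    haveI : Fintype {u : Fin n → G ⧸ Subgroup.center G //
        FreeGroup.lift u w = (g : G ⧸ Subgroup.center G)} := Fintype.ofFinite _
    haveI : ∀ u : {u : Fin n → G ⧸ Subgroup.center G //
        FreeGroup.lift u w = (g : G ⧸ Subgroup.center G)},
        Fintype {x : {v : Fin n → G // FreeGroup.lift v w = g} // F x = u} :=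
      fun u => Fintype.ofFinite _
    rw [Nat.card_eq_fintype_card, Fintype.card_sigma]
    have hconv : ∀ u, Fintype.card {x : {v : Fin n → G // FreeGroup.lift v w = g} // F x = u}
        = Nat.card (Subgroup.center G) ^ (n - 1) := fun u => by
      rw [← Nat.card_eq_fintype_card]
      exact hFfiber u
    rw [Finset.sum_congr rfl fun u _ => hconv u]
    rw [Finset.sum_const, Finset.card_univ, ← Nat.card_eq_fintype_card]
    rw [IH ((g : G ⧸ Subgroup.center G))]
    rw [smul_eq_mul, ← mul_pow, ← hcardsplit]

end Stmt7

/-- On a finite nilpotent group `G`, every surjective word map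
`w : Gⁿ → G` has all fibers of size `|G|^(n-1)`, i.e. the induced
distribution is uniform. -/
theorem stmt_7 (G : Type*) [Group G] [Finite G] [Group.IsNilpotent G]
    (n : ℕ) (w : FreeGroup (Fin n))
    (hsurj : Function.Surjective (fun v : Fin n → G => FreeGroup.lift v w)) :
    ∀ g : G, Nat.card {v : Fin n → G // FreeGroup.lift v w = g} =
      Nat.card G ^ (n - 1) := by
  intro g
  exact Stmt7.main_aux w (Nat.card G) G rfl hsurj g
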